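/- For every symmetric positive definite real 3×3 matrix Σ there exist unique real parameters τ > 0, υ > 0, ρ ∈ (−1,1), α, β ∈ ℝ and σ² > α²τ² such that Σ = [[τ², ρτυ, ατ² + βρτυ], [ρτυ, υ², βυ² + αρτυ], [ατ² + βρτυ, βυ² + αρτυ, σ² + β²υ² + 2ρτυαβ]]. That is, the frugal parameterization (τ², υ², ρ, β, σ², α) of a trivariate Gaussian family is a bijection onto the set of all positive definite 3×3 covariance matrices. -/

import Mathlib

theorem frugal_gaussian_parameterization_bijective
    (S : Matrix (Fin 3) (Fin 3) ℝ) (hsymm : S.IsSymm) (hpos : S.PosDef) :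
    ∃! q : ℝ × ℝ × ℝ × ℝ × ℝ × ℝ,
      match q with
      | (τ, υ, ρ, α, β, σsq) =>
        0 < τ ∧ 0 < υ ∧ ρ ∈ Set.Ioo (-1 : ℝ) 1 ∧ α ^ 2 * τ ^ 2 < σsq ∧
        S = !![τ ^ 2, ρ * τ * υ, α * τ ^ 2 + β * ρ * τ * υ;
               ρ * τ * υ, υ ^ 2, β * υ ^ 2 + α * ρ * τ * υ;
               α * τ ^ 2 + β * ρ * τ * υ, β * υ ^ 2 + α * ρ * τ * υ,
                 σsq + β ^ 2 * υ ^ 2 + 2 * ρ * τ * υ * α * β] := by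
  have key : ∀ v : Fin 3 → ℝ, v ≠ 0 →
      0 < v 0 * (S 0 0 * v 0 + S 0 1 * v 1 + S 0 2 * v 2)
        + v 1 * (S 1 0 * v 0 + S 1 1 * v 1 + S 1 2 * v 2)
        + v 2 * (S 2 0 * v 0 + S 2 1 * v 1 + S 2 2 * v 2) := by
    intro v hv
    have := hpos.dotProduct_mulVec_pos hv
    simpa [Matrix.mulVec, dotProduct, Fin.sum_univ_three, mul_comm] using this
  set a := S 0 0 with ha
  set b := S 0 1 with hb
  set c := S 1 1 with hc
  set d := S 0 2 with hd
  set e := S 1 2 with he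
  set f := S 2 2 with hf
  clear_value a b c d e f
  have hs10 : S 1 0 = b := by rw [hb]; exact (hsymm.apply 1 0).symm
  have hs20 : S 2 0 = d := by rw [hd]; exact (hsymm.apply 2 0).symm
  have hs21 : S 2 1 = e := by rw [he]; exact (hsymm.apply 2 1).symm
  have hapos : 0 < a := by
    have := key ![1,0,0] (by intro h; simpa using congrFun h 0)
    simpa using this
  have hcpos : 0 < c := by
    have := key ![0,1,0] (by intro h; simpa using congrFun h 1)
    simpa [hs10] using this
  have hDpos : 0 < a * c - b ^ 2 := by
    have hne : (![c, -b, 0] : Fin 3 → ℝ) ≠ 0 := by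
      intro h
      have := congrFun h 0
      simp at this
      exact hcpos.ne' this
    have := key ![c, -b, 0] hne
    simp [hs10] at this
    nlinarith [this]
  have hDne : a * c - b ^ 2 ≠ 0 := hDpos.ne'
  obtain ⟨τ, hτpos, hτ2⟩ : ∃ t : ℝ, 0 < t ∧ t ^ 2 = a :=
    ⟨Real.sqrt a, Real.sqrt_pos.mpr hapos, Real.sq_sqrt hapos.le⟩
  obtain ⟨υ, hυpos, hυ2⟩ : ∃ t : ℝ, 0 < t ∧ t ^ 2 = c :=
    ⟨Real.sqrt c, Real.sqrt_pos.mpr hcpos, Real.sq_sqrt hcpos.le⟩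
  have hτυ : τ * υ ≠ 0 := (mul_pos hτpos hυpos).ne'
  obtain ⟨ρ, hρτυ⟩ : ∃ r : ℝ, r * τ * υ = b :=
    ⟨b / (τ * υ), by field_simp⟩
  have hρmem : ρ ∈ Set.Ioo (-1 : ℝ) 1 := by
    have hb2 : b ^ 2 < a * c := by linarith [hDpos]
    have hmul : ρ ^ 2 * (a * c) = b ^ 2 := by
      linear_combination (ρ * τ * υ + b) * hρτυ - ρ ^ 2 * υ ^ 2 * hτ2 - ρ ^ 2 * a * hυ2
    have hρ2 : ρ ^ 2 < 1 := by nlinarith [hmul, hb2, mul_pos hapos hcpos]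
    constructor <;> nlinarith [hρ2]
  obtain ⟨α, β, heq1, heq2⟩ : ∃ x y : ℝ, x * a + y * b = d ∧ x * b + y * c = e := by
    refine ⟨(c * d - b * e) / (a * c - b ^ 2), (a * e - b * d) / (a * c - b ^ 2), ?_, ?_⟩ <;>
      rw [div_mul_eq_mul_div, div_mul_eq_mul_div, ← add_div, div_eq_iff hDne] <;> ring
  have hschur : 0 < f - (α ^ 2 * a + β ^ 2 * c + 2 * α * β * b) := by
    have hne : (![-α, -β, 1] : Fin 3 → ℝ) ≠ 0 := by
      intro h
      have := congrFun h 2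
      simp at this
    have hk := key ![-α, -β, 1] hne
    simp [hs10, hs20, hs21] at hk
    have z1 : -(a * α) + -(b * β) + d = 0 := by linarith [heq1]
    have z2 : -(b * α) + -(c * β) + e = 0 := by linarith [heq2]
    rw [z1, z2] at hk
    have h3 : f - (α ^ 2 * a + β ^ 2 * c + 2 * α * β * b) = -(d * α) + -(e * β) + f := by
      linear_combination (-α) * heq1 + (-β) * heq2
    simp only [mul_zero, neg_zero, zero_add] at hk
    linarith [hk, h3]
  set σsq := f - β ^ 2 * c - 2 * b * α * β with hσ
  clear_value σsq
  have hSlit : S = !![a, b, d; b, c, e; d, e, f] := by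
    rw [Matrix.eta_fin_three S, hs10, hs20, hs21, ← ha, ← hb, ← hc, ← hd, ← he, ← hf]
  refine ⟨(τ, υ, ρ, α, β, σsq), ⟨hτpos, hυpos, hρmem, ?_, ?_⟩, ?_⟩
  · rw [hτ2, hσ]; nlinarith [hschur]
  · rw [hSlit]
    have E00 : a = τ ^ 2 := hτ2.symm
    have E01 : b = ρ * τ * υ := hρτυ.symm
    have E11 : c = υ ^ 2 := hυ2.symm
    have E02 : d = α * τ ^ 2 + β * ρ * τ * υ := by
      linear_combination -heq1 - α * hτ2 - β * hρτυ
    have E12 : e = β * υ ^ 2 + α * ρ * τ * υ := by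
      linear_combination -heq2 - β * hυ2 - α * hρτυ
    have E22 : f = σsq + β ^ 2 * υ ^ 2 + 2 * ρ * τ * υ * α * β := by
      rw [hσ]; linear_combination -(β ^ 2) * hυ2 - 2 * α * β * hρτυ
    rw [E00, E01, E11, E02, E12, E22]
  · rintro ⟨τ', υ', ρ', α', β', σ'⟩ ⟨hτ', hυ', hρ', hσ', hS⟩
    have E : ∀ i j, S i j = _ := fun i j => congrFun (congrFun hS i) j
    have e00 : a = τ' ^ 2 := by have := E 0 0; rw [← ha] at this; simpa using this
    have e11 : c = υ' ^ 2 := by have := E 1 1; rw [← hc] at this; simpa using this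
    have e01 : b = ρ' * τ' * υ' := by have := E 0 1; rw [← hb] at this; simpa using this
    have e02 : d = α' * τ' ^ 2 + β' * ρ' * τ' * υ' := by have := E 0 2; rw [← hd] at this; simpa using this
    have e12 : e = β' * υ' ^ 2 + α' * ρ' * τ' * υ' := by have := E 1 2; rw [← he] at this; simpa using this
    have e22 : f = σ' + β' ^ 2 * υ' ^ 2 + 2 * ρ' * τ' * υ' * α' * β' := by
      have := E 2 2; rw [← hf] at this; simpa using this
    have hτeq : τ' = τ := by
      have hsq : (τ' - τ) * (τ' + τ) = 0 := by linear_combination -e00 - hτ2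
      rcases mul_eq_zero.mp hsq with h | h
      · exact sub_eq_zero.mp h
      · linarith
    have hυeq : υ' = υ := by
      have hsq : (υ' - υ) * (υ' + υ) = 0 := by linear_combination -e11 - hυ2
      rcases mul_eq_zero.mp hsq with h | h
      · exact sub_eq_zero.mp h
      · linarith
    have hρeq : ρ' = ρ := by
      have h : ρ' * (τ * υ) = ρ * (τ * υ) := by
        rw [hτeq, hυeq] at e01
        linear_combination -e01 - hρτυ
      exact mul_right_cancel₀ hτυ h
    have hτ'2 : τ' ^ 2 = a := by rw [hτeq]; exact hτ2
    have hυ'2 : υ' ^ 2 = c := by rw [hυeq]; exact hυ2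
    have hb' : ρ' * τ' * υ' = b := by rw [hρeq, hτeq, hυeq]; exact hρτυ
    have l1 : α' * a + β' * b = d := by linear_combination -e02 - α' * hτ'2 - β' * hb'
    have l2 : α' * b + β' * c = e := by linear_combination -e12 - β' * hυ'2 - α' * hb'
    have h1 : (α' - α) * a + (β' - β) * b = 0 := by linarith [heq1, l1]
    have h2 : (α' - α) * b + (β' - β) * c = 0 := by linarith [heq2, l2]
    have hαeq : α' = α := by
      have h0 : (α' - α) * (a * c - b ^ 2) = 0 := by linear_combination c * h1 - b * h2
      rcases mul_eq_zero.mp h0 with h | h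
      · linarith
      · exact absurd h hDne
    have hβeq : β' = β := by
      have h0 : (β' - β) * (a * c - b ^ 2) = 0 := by linear_combination a * h2 - b * h1
      rcases mul_eq_zero.mp h0 with h | h
      · linarith
      · exact absurd h hDne
    rw [hαeq, hβeq] at e22
    have hσeq : σ' = σsq := by
      rw [hσ]; linear_combination -e22 - β ^ 2 * hυ'2 - 2 * α * β * hb'
    simp only [Prod.mk.injEq]
    exact ⟨hτeq, hυeq, hρeq, hαeq, hβeq, hσeq⟩
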